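/- The map π maps the unit 3-sphere onto the Brieskorn sphere: for every w = (w₁,w₂,w₃) ∈ ℂ³ with w₁² − 2i·w₂w₃ = 0 and |w₁|² + |w₂|² + |w₃|² = 1, there exists (z₀,z₁) ∈ ℂ² with |z₀|² + |z₁|² = 1 and π(z₀,z₁) = w. -/

import Mathlib

open Complex

/-- The map `π : ℂ² → ℂ³`, `π(z₀,z₁) = (√2·z₀z₁, z₀², −i·z₁²)`. -/
noncomputable def brPi (z : ℂ × ℂ) : ℂ × ℂ × ℂ :=
  ((Real.sqrt 2 : ℂ) * z.1 * z.2, z.1 ^ 2, -Complex.I * z.2 ^ 2)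

/-- The map `π` maps the unit `3`-sphere onto the Brieskorn sphere: for every
`w = (w₁,w₂,w₃) ∈ ℂ³` with `w₁² − 2i·w₂w₃ = 0` and `|w₁|² + |w₂|² + |w₃|² = 1`, there is
`(z₀,z₁) ∈ ℂ²` with `|z₀|² + |z₁|² = 1` and `π(z₀,z₁) = w`. -/
theorem brPi_surjective_onto_brieskorn (w : ℂ × ℂ × ℂ)
    (h1 : w.1 ^ 2 - 2 * Complex.I * w.2.1 * w.2.2 = 0)
    (h2 : ‖w.1‖ ^ 2 + ‖w.2.1‖ ^ 2 + ‖w.2.2‖ ^ 2 = 1) :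
    ∃ z : ℂ × ℂ, ‖z.1‖ ^ 2 + ‖z.2‖ ^ 2 = 1 ∧ brPi z = w := by
  obtain ⟨a, ha⟩ : ∃ a : ℂ, a ^ 2 = w.2.1 := by
    obtain ⟨a, ha⟩ := IsAlgClosed.exists_pow_nat_eq w.2.1 (n := 2) (by norm_num)
    exact ⟨a, ha⟩
  obtain ⟨b, hb⟩ : ∃ b : ℂ, b ^ 2 = Complex.I * w.2.2 := by
    obtain ⟨b, hb⟩ := IsAlgClosed.exists_pow_nat_eq (Complex.I * w.2.2) (n := 2) (by norm_num)
    exact ⟨b, hb⟩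
  -- norms
  have habs : ‖a‖ ^ 2 + ‖b‖ ^ 2 = 1 := by
    have ha' : ‖a‖ ^ 2 = ‖w.2.1‖ := by
      rw [← norm_pow, ha]
    have hb' : ‖b‖ ^ 2 = ‖w.2.2‖ := by
      rw [← norm_pow, hb, norm_mul, Complex.norm_I, one_mul]
    have hw1 : ‖w.1‖ ^ 2 = 2 * ‖w.2.1‖ * ‖w.2.2‖ := by
      have : w.1 ^ 2 = 2 * Complex.I * w.2.1 * w.2.2 := by linear_combination h1
      calc ‖w.1‖ ^ 2 = ‖w.1 ^ 2‖ := by rw [norm_pow]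
        _ = ‖2 * Complex.I * w.2.1 * w.2.2‖ := by rw [this]
        _ = 2 * ‖w.2.1‖ * ‖w.2.2‖ := by
            simp [norm_mul, Complex.norm_I]
    have h3 : (‖w.2.1‖ + ‖w.2.2‖) ^ 2 = 1 := by
      ring_nf
      nlinarith [h2, hw1]
    have h4 : ‖w.2.1‖ + ‖w.2.2‖ = 1 := by
      nlinarith [norm_nonneg w.2.1, norm_nonneg w.2.2, h3]
    rw [ha', hb', h4]
  have key : ((Real.sqrt 2 : ℂ) * a * b) ^ 2 = w.1 ^ 2 := by
    have hs : ((Real.sqrt 2 : ℂ)) ^ 2 = 2 := by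
      norm_cast
      rw [Real.sq_sqrt] <;> norm_num
    have : ((Real.sqrt 2 : ℂ) * a * b) ^ 2 = 2 * Complex.I * w.2.1 * w.2.2 := by
      rw [mul_pow, mul_pow, hs, ha, hb]; ring
    rw [this]; linear_combination -h1
  have hcase : (Real.sqrt 2 : ℂ) * a * b = w.1 ∨ (Real.sqrt 2 : ℂ) * a * b = -w.1 := by
    have := sq_eq_sq_iff_eq_or_eq_neg.mp key
    exact this
  have hthird : -Complex.I * b ^ 2 = w.2.2 := by
    linear_combination -Complex.I * hb - w.2.2 * Complex.I_sq
  rcases hcase with h | h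
  · exact ⟨(a, b), habs, Prod.ext h (Prod.ext ha hthird)⟩
  · refine ⟨(a, -b), by simpa using habs, Prod.ext ?_ (Prod.ext ha ?_)⟩
    · show (Real.sqrt 2 : ℂ) * a * -b = w.1
      linear_combination -h
    · show -Complex.I * (-b) ^ 2 = w.2.2
      linear_combination hthird
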